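/- arXiv:1607.08337 — 2 statements merged into one kernel-verified Lean document; each statement's English description precedes it below -/
import Mathlib

section
/- Let δ₁,…,δₙ be i.i.d. Exp(β) random variables, d₁,…,dₙ real constants, and define the random count C = |{i : δᵢ - dᵢ ≥ maxⱼ(δⱼ - dⱼ) - 1}|. Then E[C] ≤ e^β. -/
open MeasureTheory ProbabilityTheory Real
open scoped ENNReal NNReal

section Aux

open Set

lemma my_sup'_attach {α β : Type*} [SemilatticeSup α] (s : Finset β) (hs : s.attach.Nonempty)
    (hs' : s.Nonempty) (f : β → α) :
    s.attach.sup' hs (fun x => f x) = s.sup' hs' f := by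
  apply le_antisymm
  · apply Finset.sup'_le
    intro b _
    exact Finset.le_sup' f b.2
  · apply Finset.sup'_le
    intro b hb
    exact Finset.le_sup' (f := fun x : {x // x ∈ s} => f x) (Finset.mem_attach s ⟨b, hb⟩)

lemma expMeasure_Iic {β : ℝ} (hβ : 0 < β) (t : ℝ) :
    expMeasure β (Iic t) = ENNReal.ofReal (if 0 ≤ t then 1 - exp (-(β * t)) else 0) := by
  rw [show expMeasure β = volume.withDensity (exponentialPDF β) from rfl,
    withDensity_apply _ measurableSet_Iic]
  exact lintegral_exponentialPDF_eq_antiDeriv hβ t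

lemma expMeasure_singleton {β : ℝ} (t : ℝ) : expMeasure β {t} = 0 := by
  rw [show expMeasure β = volume.withDensity (exponentialPDF β) from rfl,
    withDensity_apply _ (measurableSet_singleton t)]
  rw [Measure.restrict_eq_zero.mpr (volume_singleton)]
  simp

lemma expMeasure_Ioi {β : ℝ} (hβ : 0 < β) (t : ℝ) :
    expMeasure β (Ioi t) = ENNReal.ofReal (exp (-(β * max t 0))) := by
  haveI := isProbabilityMeasure_expMeasure hβ
  have hc : expMeasure β (Ioi t) = 1 - expMeasure β (Iic t) := by
    rw [← Set.compl_Iic, measure_compl measurableSet_Iic (measure_ne_top _ _), measure_univ]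
  rw [hc, expMeasure_Iic hβ]
  rcases le_or_gt 0 t with ht | ht
  · rw [if_pos ht, max_eq_left ht]
    have h1 : (1 : ℝ≥0∞) = ENNReal.ofReal (exp (-(β * t))) + ENNReal.ofReal (1 - exp (-(β * t))) := by
      rw [← ENNReal.ofReal_add (exp_pos _).le]
      · norm_num
      · have : exp (-(β * t)) ≤ 1 := by
          rw [exp_le_one_iff]
          have := mul_nonneg hβ.le ht
          linarith
        linarith
    exact ENNReal.sub_eq_of_eq_add ENNReal.ofReal_ne_top h1
  · rw [if_neg (not_le.mpr ht), max_eq_right ht.le]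
    simp

lemma expMeasure_Ici {β : ℝ} (hβ : 0 < β) (t : ℝ) :
    expMeasure β (Ici t) = ENNReal.ofReal (exp (-(β * max t 0))) := by
  rw [← expMeasure_Ioi hβ]
  apply le_antisymm
  · calc expMeasure β (Ici t) = expMeasure β ({t} ∪ Ioi t) := by
          rw [Set.singleton_union, Set.Ioi_insert]
      _ ≤ expMeasure β {t} + expMeasure β (Ioi t) := measure_union_le _ _
      _ = expMeasure β (Ioi t) := by rw [expMeasure_singleton, zero_add]
  · exact measure_mono Set.Ioi_subset_Ici_self

lemma expMeasure_tail_le {β : ℝ} (hβ : 0 < β) (y : ℝ) :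
    expMeasure β (Ici (y - 1)) ≤ ENNReal.ofReal (exp β) * expMeasure β (Ioi y) := by
  rw [expMeasure_Ici hβ, expMeasure_Ioi hβ, ← ENNReal.ofReal_mul (exp_pos _).le, ← exp_add]
  apply ENNReal.ofReal_le_ofReal
  rw [exp_le_exp]
  have h1 : max y 0 ≤ max (y - 1) 0 + 1 := by
    apply max_le
    · linarith [le_max_left (y - 1) (0 : ℝ)]
    · linarith [le_max_right (y - 1) (0 : ℝ)]
  nlinarith

/-- Key lemma: if `X` is exponential and independent of `Y`, then
`P(Y - 1 ≤ X) ≤ e^β * P(Y < X)`. -/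
lemma key_indep_bound {Ω : Type*} [MeasurableSpace Ω] (μ : Measure Ω) [IsProbabilityMeasure μ]
    {β : ℝ} (hβ : 0 < β) (X Y : Ω → ℝ) (hX : Measurable X) (hY : Measurable Y)
    (hind : IndepFun X Y μ) (hlawX : Measure.map X μ = expMeasure β) :
    μ {ω | Y ω - 1 ≤ X ω} ≤ ENNReal.ofReal (exp β) * μ {ω | Y ω < X ω} := by
  haveI := isProbabilityMeasure_expMeasure hβ
  haveI : IsProbabilityMeasure (μ.map Y) := Measure.isProbabilityMeasure_map hY.aemeasurable
  have hm : Measurable fun ω => (Y ω, X ω) := hY.prodMk hX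
  have hmap : μ.map (fun ω => (Y ω, X ω)) = (μ.map Y).prod (expMeasure β) := by
    rw [← hlawX]
    exact (indepFun_iff_map_prod_eq_prod_map_map hY.aemeasurable hX.aemeasurable).mp hind.symm
  have hS1 : MeasurableSet {p : ℝ × ℝ | p.1 - 1 ≤ p.2} :=
    measurableSet_le (measurable_fst.sub measurable_const) measurable_snd
  have hS2 : MeasurableSet {p : ℝ × ℝ | p.1 < p.2} := measurableSet_lt measurable_fst measurable_snd
  have e1 : μ {ω | Y ω - 1 ≤ X ω}
      = ∫⁻ y, expMeasure β (Set.Ici (y - 1)) ∂(μ.map Y) := by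
    have hpre : {ω | Y ω - 1 ≤ X ω} = (fun ω => (Y ω, X ω)) ⁻¹' {p : ℝ × ℝ | p.1 - 1 ≤ p.2} := rfl
    rw [hpre, ← Measure.map_apply hm hS1, hmap, Measure.prod_apply hS1]
    rfl
  have e2 : μ {ω | Y ω < X ω} = ∫⁻ y, expMeasure β (Set.Ioi y) ∂(μ.map Y) := by
    have hpre : {ω | Y ω < X ω} = (fun ω => (Y ω, X ω)) ⁻¹' {p : ℝ × ℝ | p.1 < p.2} := rfl
    rw [hpre, ← Measure.map_apply hm hS2, hmap, Measure.prod_apply hS2]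
    rfl
  rw [e1, e2, ← lintegral_const_mul' _ _ ENNReal.ofReal_ne_top]
  exact lintegral_mono fun y => expMeasure_tail_le hβ y

end Aux

/-- The expected number of indices whose shifted exponential is within 1 of the
maximum is at most `e^β`. -/
theorem expected_card_near_max_le
    {Ω : Type*} [MeasurableSpace Ω] (μ : Measure Ω) [IsProbabilityMeasure μ]
    (β : ℝ) (hβ : 0 < β) (n : ℕ) (hn : 0 < n) (d : Fin n → ℝ)
    (δ : Fin n → Ω → ℝ) (hmeas : ∀ i, Measurable (δ i))
    (hindep : iIndepFun δ μ)
    (hlaw : ∀ i, Measure.map (δ i) μ = expMeasure β) :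
    ∫ ω, ((Finset.univ.filter
        (fun i => (⨆ j, (δ j ω - d j)) - 1 ≤ δ i ω - d i)).card : ℝ) ∂μ
      ≤ Real.exp β := by
  have hexp1 : (1 : ℝ) ≤ Real.exp β := by
    rw [show (1 : ℝ) = Real.exp 0 by simp]
    exact exp_le_exp.mpr hβ.le
  haveI : Nonempty (Fin n) := ⟨⟨0, hn⟩⟩
  by_cases hn1 : n = 1
  · subst hn1
    have hcond : ∀ ω, (Finset.univ.filter
        (fun i => (⨆ j, (δ j ω - d j)) - 1 ≤ δ i ω - d i)) = Finset.univ := by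
      intro ω
      apply Finset.filter_true_of_mem
      intro i _
      have hi : i = 0 := Subsingleton.elim _ _
      have hsup : (⨆ j : Fin 1, (δ j ω - d j)) = δ 0 ω - d 0 := by
        rw [ciSup_unique]
        rfl
      rw [hsup, hi]
      linarith
    calc ∫ ω, ((Finset.univ.filter
            (fun i => (⨆ j, (δ j ω - d j)) - 1 ≤ δ i ω - d i)).card : ℝ) ∂μ
        = ∫ _ω, (1 : ℝ) ∂μ := by
          apply integral_congr_ae
          filter_upwards with ω
          rw [hcond ω]
          simp
      _ = 1 := by simp
      _ ≤ Real.exp β := hexp1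
  -- main case : n ≥ 2
  have hn2 : 2 ≤ n := by omega
  -- the shifted family and its global sup
  have hne : (Finset.univ : Finset (Fin n)).Nonempty := Finset.univ_nonempty
  have hgmeas : Measurable (Finset.univ.sup' hne (fun j => fun ω => δ j ω - d j)) :=
    Finset.measurable_sup' hne fun j _ => (hmeas j).sub measurable_const
  have hgval : ∀ ω, (⨆ j, (δ j ω - d j))
      = Finset.univ.sup' hne (fun j => fun ω => δ j ω - d j) ω := by
    intro ω
    rw [Finset.sup'_apply, ← Finset.sup'_univ_eq_ciSup]
  set g : Ω → ℝ := Finset.univ.sup' hne (fun j => fun ω => δ j ω - d j) with hg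
  -- per-index events
  have herase : ∀ i : Fin n, (Finset.univ.erase i).Nonempty := by
    intro i
    rw [← Finset.card_pos, Finset.card_erase_of_mem (Finset.mem_univ i), Finset.card_univ,
      Fintype.card_fin]
    omega
  set M : Fin n → Ω → ℝ := fun i ω => (Finset.univ.erase i).sup' (herase i)
    (fun j => δ j ω - d j) with hM
  set A : Fin n → Set Ω := fun i => {ω | (M i ω + d i) - 1 ≤ δ i ω} with hA
  set B : Fin n → Set Ω := fun i => {ω | M i ω + d i < δ i ω} with hB
  -- measurability of M i
  have hMmeas : ∀ i, Measurable (M i) := by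
    intro i
    have : Measurable ((Finset.univ.erase i).sup' (herase i) (fun j => fun ω => δ j ω - d j)) :=
      Finset.measurable_sup' (herase i) fun j _ => (hmeas j).sub measurable_const
    convert this using 1
    funext ω
    rw [Finset.sup'_apply]
  have hAmeas : ∀ i, MeasurableSet (A i) := fun i =>
    measurableSet_le (((hMmeas i).add_const _).sub measurable_const) (hmeas i)
  have hBmeas : ∀ i, MeasurableSet (B i) := fun i =>
    measurableSet_lt ((hMmeas i).add_const _) (hmeas i)
  -- the filter condition for index i is exactly membership in A i
  have hcond : ∀ ω i, ((⨆ j, (δ j ω - d j)) - 1 ≤ δ i ω - d i ↔ ω ∈ A i) := by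
    intro ω i
    rw [hgval ω]
    have hsplit : g ω = max (δ i ω - d i) (M i ω) := by
      apply le_antisymm
      · simp only [hg, Finset.sup'_apply, Finset.sup'_le_iff]
        intro j _
        rcases eq_or_ne j i with rfl | hji
        · exact le_max_left _ _
        · refine le_trans ?_ (le_max_right _ _)
          simp only [hM]
          exact Finset.le_sup' (fun j => δ j ω - d j)
            (Finset.mem_erase.mpr ⟨hji, Finset.mem_univ j⟩)
      · apply max_le
        · simp only [hg, Finset.sup'_apply]
          exact Finset.le_sup' (fun j => δ j ω - d j) (Finset.mem_univ i)
        · simp only [hg, hM, Finset.sup'_apply]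
          apply Finset.sup'_le
          intro j _
          exact Finset.le_sup' (fun j => δ j ω - d j) (Finset.mem_univ j)
    show g ω - 1 ≤ δ i ω - d i ↔ (M i ω + d i) - 1 ≤ δ i ω
    rw [hsplit]
    constructor
    · intro h
      have h2 : M i ω - 1 ≤ δ i ω - d i := by
        have := le_max_right (δ i ω - d i) (M i ω)
        linarith
      linarith
    · intro h
      have h2 : max (δ i ω - d i) (M i ω) ≤ δ i ω - d i + 1 :=
        max_le (by linarith) (by linarith)
      linarith
  -- rewrite the integrand as a sum of indicators
  have hint : ∀ ω, ((Finset.univ.filter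
      (fun i => (⨆ j, (δ j ω - d j)) - 1 ≤ δ i ω - d i)).card : ℝ)
      = ∑ i, Set.indicator (A i) (fun _ => (1 : ℝ)) ω := by
    intro ω
    rw [Finset.card_filter]
    push_cast
    apply Finset.sum_congr rfl
    intro i _
    rw [Set.indicator_apply]
    by_cases h : ω ∈ A i
    · rw [if_pos ((hcond ω i).mpr h), if_pos h]
    · rw [if_neg (fun hc => h ((hcond ω i).mp hc)), if_neg h]
  have hintegral : ∫ ω, ((Finset.univ.filter
      (fun i => (⨆ j, (δ j ω - d j)) - 1 ≤ δ i ω - d i)).card : ℝ) ∂μ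
      = ∑ i, (μ (A i)).toReal := by
    rw [integral_congr_ae (Filter.Eventually.of_forall hint), integral_finset_sum _
      (fun i _ => (integrable_const (1 : ℝ)).indicator (hAmeas i))]
    apply Finset.sum_congr rfl
    intro i _
    rw [integral_indicator_const (1 : ℝ) (hAmeas i), smul_eq_mul, mul_one, measureReal_def]
  rw [hintegral]
  -- per-index bound via independence
  have hkey : ∀ i, μ (A i) ≤ ENNReal.ofReal (Real.exp β) * μ (B i) := by
    intro i
    set Y : Ω → ℝ := fun ω => M i ω + d i with hY
    have hYmeas : Measurable Y := (hMmeas i).add_const _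
    -- independence of δ i and Y
    have hdisj : Disjoint ({i} : Finset (Fin n)) (Finset.univ.erase i) := by
      simp [Finset.disjoint_left]
    have hIndT := hindep.indepFun_finset {i} (Finset.univ.erase i) hdisj hmeas
    have hφ : Measurable (fun v : ({i} : Finset (Fin n)) → ℝ =>
        v ⟨i, Finset.mem_singleton_self i⟩) := measurable_pi_apply _
    have hattach : ((Finset.univ.erase i).attach).Nonempty := by
      rw [← Finset.card_pos, Finset.card_attach, Finset.card_pos]
      exact herase i
    have hψ : Measurable (fun v : {x // x ∈ Finset.univ.erase i} → ℝ =>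
        ((Finset.univ.erase i).attach.sup' hattach (fun j => v j - d j)) + d i) := by
      apply Measurable.add_const
      have h0 : Measurable ((Finset.univ.erase i).attach.sup' hattach
          (fun j => fun v : {x // x ∈ Finset.univ.erase i} → ℝ => v j - d j)) :=
        Finset.measurable_sup' hattach fun j _ => (measurable_pi_apply j).sub measurable_const
      convert h0 using 1
      funext v
      rw [Finset.sup'_apply]
    have hInd : IndepFun (δ i) Y μ := by
      have := hIndT.comp hφ hψ
      convert this using 1
      · rfl
      funext ω
      simp only [hY, hM]
      congr 1
      exact (my_sup'_attach (Finset.univ.erase i) hattach (herase i)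
        (fun j => δ j ω - d j)).symm
    have hAB : A i = {ω | Y ω - 1 ≤ δ i ω} ∧ B i = {ω | Y ω < δ i ω} := ⟨rfl, rfl⟩
    rw [hAB.1, hAB.2]
    exact key_indep_bound μ hβ (δ i) Y (hmeas i) hYmeas hInd (hlaw i)
  -- the events B i are pairwise disjoint
  have hdisjB : ∀ i k : Fin n, i ≠ k → Disjoint (B i) (B k) := by
    intro i k hik
    rw [Set.disjoint_left]
    intro ω hωi hωk
    have hi : δ k ω - d k < δ i ω - d i := by
      have : M i ω < δ i ω - d i := by
        have : M i ω + d i < δ i ω := hωi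
        linarith
      have hk_mem : k ∈ Finset.univ.erase i := Finset.mem_erase.mpr ⟨hik.symm, Finset.mem_univ k⟩
      calc δ k ω - d k ≤ M i ω := by
            simp only [hM]
            exact Finset.le_sup' (fun j => δ j ω - d j) hk_mem
        _ < δ i ω - d i := this
    have hk : δ i ω - d i < δ k ω - d k := by
      have : M k ω < δ k ω - d k := by
        have : M k ω + d k < δ k ω := hωk
        linarith
      have hi_mem : i ∈ Finset.univ.erase k := Finset.mem_erase.mpr ⟨hik, Finset.mem_univ i⟩
      calc δ i ω - d i ≤ M k ω := by
            simp only [hM]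
            exact Finset.le_sup' (fun j => δ j ω - d j) hi_mem
        _ < δ k ω - d k := this
    linarith
  -- sum of B measures is at most 1
  have hBsum : ∑ i, μ (B i) ≤ 1 := by
    rw [← measure_biUnion_finset (fun i _ => fun k _ hik => hdisjB i k hik) (fun i _ => hBmeas i)]
    exact prob_le_one
  -- assemble
  have hsumA : ∑ i, μ (A i) ≤ ENNReal.ofReal (Real.exp β) := by
    calc ∑ i, μ (A i) ≤ ∑ i, ENNReal.ofReal (Real.exp β) * μ (B i) :=
          Finset.sum_le_sum fun i _ => hkey i
      _ = ENNReal.ofReal (Real.exp β) * ∑ i, μ (B i) := by rw [Finset.mul_sum]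
      _ ≤ ENNReal.ofReal (Real.exp β) * 1 :=
          mul_le_mul_right hBsum _
      _ = ENNReal.ofReal (Real.exp β) := mul_one _
  calc ∑ i, (μ (A i)).toReal = (∑ i, μ (A i)).toReal :=
        (ENNReal.toReal_sum (fun i _ => measure_ne_top μ (A i))).symm
    _ ≤ Real.exp β := ENNReal.toReal_le_of_le_ofReal (exp_pos β).le hsumA
end

section
/- Suppose a spanner H over graph G satisfies: for every pair x,y with d_G(x,y) ≤ D (for some D ≥ 3), d_H(x,y) ≤ α·d_G(x,y) + b. Then for every pair u,v ∈ V, d_H(u,v) ≤ (α + 2b/(D−2))·d_G(u,v) + b. -/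
private lemma step_vertex {V : Type*} {G : SimpleGraph V} (hG : G.Connected)
    {u v : V} {n : ℕ} (h : G.dist u v = n + 1) :
    ∃ w, G.Adj u w ∧ G.dist w v = n := by
  obtain ⟨p, hp⟩ := hG.exists_walk_length_eq_dist u v
  cases p with
  | nil => simp at h
  | @cons _ w _ hadj q =>
      refine ⟨w, hadj, le_antisymm ?_ ?_⟩
      · have hq : q.length = n := by
          simpa [h] using hp
        simpa [hq] using SimpleGraph.dist_le q
      · have htri := hG.dist_triangle (u := u) (v := w) (w := v)
        have huw : G.dist u w ≤ 1 := by
          simpa using SimpleGraph.dist_le (SimpleGraph.Walk.cons hadj SimpleGraph.Walk.nil)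
        omega

private lemma mid_vertex {V : Type*} {G : SimpleGraph V} (hG : G.Connected)
    (u v : V) (k : ℕ) (hk : k ≤ G.dist u v) :
    ∃ w, G.dist u w = k ∧ G.dist w v = G.dist u v - k := by
  induction k with
  | zero => exact ⟨u, by simp [SimpleGraph.dist_self]⟩
  | succ k ih =>
      obtain ⟨w, hw1, hw2⟩ := ih (Nat.le_of_succ_le hk)
      have hpos : G.dist w v = (G.dist u v - (k + 1)) + 1 := by omega
      obtain ⟨w', hadj, hw'⟩ := step_vertex hG hpos
      refine ⟨w', le_antisymm ?_ ?_, hw'⟩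
      · calc G.dist u w' ≤ G.dist u w + G.dist w w' := hG.dist_triangle
          _ ≤ k + 1 := by
            have : G.dist w w' ≤ 1 := by
              simpa using SimpleGraph.dist_le (SimpleGraph.Walk.cons hadj SimpleGraph.Walk.nil)
            omega
      · have := hG.dist_triangle (u := u) (v := w') (w := v)
        omega

/-- Local-to-global stretch: if a spanner `H` of `G` satisfies
`d_H(x,y) ≤ α·d_G(x,y) + b` for all pairs at `G`-distance at most `D ≥ 3`,
then `d_H(u,v) ≤ (α + 2b/(D−2))·d_G(u,v) + b` for all pairs. -/
theorem local_to_global_stretch {V : Type*} (G H : SimpleGraph V)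
    (hG : G.Connected) (hH : H.Connected) (hHG : H ≤ G)
    (α b D : ℝ) (hα : 1 ≤ α) (hb : 0 ≤ b) (hD : 3 ≤ D)
    (hlocal : ∀ x y : V, (G.dist x y : ℝ) ≤ D →
      (H.dist x y : ℝ) ≤ α * (G.dist x y : ℝ) + b) :
    ∀ u v : V, (H.dist u v : ℝ) ≤ (α + 2 * b / (D - 2)) * (G.dist u v : ℝ) + b := by
  have hD2 : (0:ℝ) < D - 2 := by linarith
  have hc : 0 ≤ 2 * b / (D - 2) := by positivity
  -- strong induction on G.dist u v
  suffices h : ∀ n : ℕ, ∀ u v : V, G.dist u v = n →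
      (H.dist u v : ℝ) ≤ (α + 2 * b / (D - 2)) * n + b by
    intro u v; exact h _ u v rfl
  intro n
  induction n using Nat.strong_induction_on with
  | _ n ih =>
    intro u v hn
    by_cases hnD : (n : ℝ) ≤ D
    · have := hlocal u v (by rw [hn]; exact hnD)
      rw [hn] at this
      have hn0 : (0:ℝ) ≤ (n:ℝ) := Nat.cast_nonneg n
      nlinarith
    · push_neg at hnD
      set k : ℕ := ⌈D⌉₊ - 2 with hkdef
      have hDk3 : 3 ≤ ⌈D⌉₊ := by
        have h3 : (3:ℝ) ≤ (⌈D⌉₊ : ℝ) := le_trans hD (Nat.le_ceil D)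
        exact_mod_cast h3
      have hkD : (k : ℝ) ≤ D := by
        have h1 : (⌈D⌉₊ : ℝ) < D + 1 := Nat.ceil_lt_add_one (by linarith)
        have : (k : ℝ) = (⌈D⌉₊ : ℝ) - 2 := by
          have : ((⌈D⌉₊ - 2 : ℕ) : ℝ) = (⌈D⌉₊ : ℝ) - 2 := by
            have : 2 ≤ ⌈D⌉₊ := by omega
            push_cast [this]; ring
          simpa [hkdef] using this
        linarith
      have hkD2 : D - 2 ≤ (k : ℝ) := by
        have h2 : D ≤ (⌈D⌉₊ : ℝ) := Nat.le_ceil D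
        have : ((⌈D⌉₊ - 2 : ℕ) : ℝ) = (⌈D⌉₊ : ℝ) - 2 := by
          have : 2 ≤ ⌈D⌉₊ := by omega
          push_cast [this]; ring
        rw [hkdef, this]; linarith
      have hk1 : 1 ≤ k := by
        have : (1:ℝ) ≤ (k:ℝ) := by linarith
        exact_mod_cast this
      have hkn : k < n := by
        have : (k:ℝ) < (n:ℝ) := lt_of_le_of_lt hkD hnD
        exact_mod_cast this
      obtain ⟨w, hw1, hw2⟩ := mid_vertex hG u v k (by omega : k ≤ G.dist u v)
      -- local bound on u—w
      have hHuw : (H.dist u w : ℝ) ≤ α * k + b := by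
        have := hlocal u w (by rw [hw1]; exact hkD)
        rwa [hw1] at this
      -- inductive bound on w—v
      have hHwv : (H.dist w v : ℝ) ≤ (α + 2 * b / (D - 2)) * (n - k : ℕ) + b := by
        exact ih (n - k) (by omega) w v (by omega)
      have htri : (H.dist u v : ℝ) ≤ (H.dist u w : ℝ) + (H.dist w v : ℝ) := by
        exact_mod_cast hH.dist_triangle
      have hcast : ((n - k : ℕ) : ℝ) = (n : ℝ) - (k : ℝ) := by
        push_cast [Nat.le_of_lt hkn]; ring
      rw [hcast] at hHwv
      -- key: (2b/(D-2)) * k ≥ b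
      have hkey : b ≤ 2 * b / (D - 2) * (k : ℝ) := by
        have h1 : 2 * b / (D - 2) * (D - 2) ≤ 2 * b / (D - 2) * (k : ℝ) :=
          mul_le_mul_of_nonneg_left hkD2 hc
        rw [div_mul_cancel₀] at h1
        · linarith
        · exact ne_of_gt hD2
      calc (H.dist u v : ℝ) ≤ (H.dist u w : ℝ) + (H.dist w v : ℝ) := htri
        _ ≤ (α * k + b) + ((α + 2 * b / (D - 2)) * ((n:ℝ) - (k:ℝ)) + b) := by linarith
        _ ≤ (α + 2 * b / (D - 2)) * n + b := by nlinarith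
end
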